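/- Let α ∈ [1,2] and define φ(z) = (1/(2α))·[((1+z)/(1−z))^α − 1] for z ∈ 𝔻, using the principal branch of powers. Then φ is univalent (injective) on 𝔻, φ(0) = 0, and dist(φ(0), ∂φ(𝔻)) = 1/(2α). -/

import Mathlib

open Complex Metric Set

noncomputable section

/-- The open unit disk in the complex plane. -/
def unitDisk : Set ℂ := Metric.ball 0 1

/-- `h` is subordinate to `φ` on the unit disk: `h = φ ∘ ω` for some analytic
self-map `ω` of the unit disk fixing the origin. -/
def Subordinate (h φ : ℂ → ℂ) : Prop :=
  ∃ ω : ℂ → ℂ, AnalyticOnNhd ℂ ω unitDisk ∧ ω 0 = 0 ∧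
    Set.MapsTo ω unitDisk unitDisk ∧ ∀ z ∈ unitDisk, h z = φ (ω z)

open Real

-- L3: log of cpow with real exponent
lemma aux_log_cpow {w : ℂ} (hw : w ≠ 0) {β : ℝ} (h1 : -π < β * w.arg)
    (h2 : β * w.arg ≤ π) : Complex.log (w ^ (β:ℂ)) = (β:ℂ) * Complex.log w := by
  rw [Complex.cpow_def_of_ne_zero hw, mul_comm, Complex.log_exp] <;>
    rwa [Complex.im_ofReal_mul, Complex.log_im]

lemma aux_arg_cpow {w : ℂ} (hw : w ≠ 0) {β : ℝ} (h1 : -π < β * w.arg)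
    (h2 : β * w.arg ≤ π) : (w ^ (β:ℂ)).arg = β * w.arg := by
  rw [← Complex.log_im, aux_log_cpow hw h1 h2, Complex.im_ofReal_mul, Complex.log_im]

lemma aux_cpow_ne_zero {w : ℂ} (hw : w ≠ 0) (β : ℝ) : w ^ (β:ℂ) ≠ 0 := by
  rw [Complex.cpow_def_of_ne_zero hw]; exact Complex.exp_ne_zero _

-- bounds for α * arg w when Re w > 0, 1 ≤ α ≤ 2
lemma aux_arg_bounds {w : ℂ} (hw : 0 < w.re) {α : ℝ} (h1 : 1 ≤ α) (h2 : α ≤ 2) :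
    -π < α * w.arg ∧ α * w.arg ≤ π ∧ |α * w.arg| < α * π / 2 := by
  have ha : -(π/2) < w.arg := Complex.neg_pi_div_two_lt_arg_iff.2 (Or.inl hw)
  have hb : w.arg < π/2 := Complex.arg_lt_pi_div_two_iff.2 (Or.inl hw)
  have hπ := Real.pi_pos
  have h3 : α * w.arg < α * (π/2) := by nlinarith
  have h4 : α * (-(π/2)) < α * w.arg := by nlinarith
  refine ⟨by nlinarith, by nlinarith, ?_⟩
  rw [abs_lt]; constructor <;> nlinarith

-- injectivity of w ↦ w^α on right half plane
lemma aux_cpow_injOn {α : ℝ} (h1 : 1 ≤ α) (h2 : α ≤ 2) :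
    Set.InjOn (fun w : ℂ => w ^ (α:ℂ)) {w : ℂ | 0 < w.re} := by
  intro w1 hw1 w2 hw2 h
  have hw1' : w1 ≠ 0 := fun h0 => by simp [h0] at hw1
  have hw2' : w2 ≠ 0 := fun h0 => by simp [h0] at hw2
  obtain ⟨b1, b1', -⟩ := aux_arg_bounds hw1 h1 h2
  obtain ⟨b2, b2', -⟩ := aux_arg_bounds hw2 h1 h2
  have hlog : (α:ℂ) * Complex.log w1 = (α:ℂ) * Complex.log w2 := by
    rw [← aux_log_cpow hw1' b1 b1', ← aux_log_cpow hw2' b2 b2']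
    exact congrArg Complex.log h
  have hα : (α:ℂ) ≠ 0 := by
    simp only [ne_eq, Complex.ofReal_eq_zero]; linarith
  have := mul_left_cancel₀ hα hlog
  rw [← Complex.exp_log hw1', ← Complex.exp_log hw2', this]

-- surjectivity onto the sector
lemma aux_cpow_surj {α : ℝ} (h1 : 1 ≤ α) (h2 : α ≤ 2) {v : ℂ} (hv : v ≠ 0)
    (harg : |v.arg| < α * π / 2) : ∃ w : ℂ, 0 < w.re ∧ w ^ (α:ℂ) = v := by
  have hπ := Real.pi_pos
  have hα0 : (0:ℝ) < α := by linarith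
  have hva := Complex.abs_arg_le_pi v
  have hb1 : -π < α⁻¹ * v.arg := by
    rcases abs_lt.1 harg with ⟨l, r⟩
    rw [neg_lt, ← mul_neg]
    have : α⁻¹ * (-v.arg) < α⁻¹ * (α * π / 2) :=
      mul_lt_mul_of_pos_left (by linarith) (inv_pos.2 hα0)
    have h' : α⁻¹ * (α * π / 2) = π / 2 := by field_simp
    linarith
  have hb2 : α⁻¹ * v.arg ≤ π := by
    rcases abs_lt.1 harg with ⟨l, r⟩
    have : α⁻¹ * v.arg < α⁻¹ * (α * π / 2) :=
      mul_lt_mul_of_pos_left (by linarith) (inv_pos.2 hα0)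
    have h' : α⁻¹ * (α * π / 2) = π / 2 := by field_simp
    linarith
  refine ⟨v ^ ((α⁻¹ : ℝ):ℂ), ?_, ?_⟩
  · have hu : (v ^ ((α⁻¹ : ℝ):ℂ)).arg = α⁻¹ * v.arg := aux_arg_cpow hv hb1 hb2
    have habs : |(v ^ ((α⁻¹ : ℝ):ℂ)).arg| < π / 2 := by
      rw [hu, abs_mul, abs_of_pos (inv_pos.2 hα0)]
      have : α⁻¹ * |v.arg| < α⁻¹ * (α * π / 2) :=
        mul_lt_mul_of_pos_left harg (inv_pos.2 hα0)
      have h' : α⁻¹ * (α * π / 2) = π / 2 := by field_simp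
      linarith
    rcases Complex.abs_arg_lt_pi_div_two_iff.1 habs with h | h
    · exact h
    · exact absurd h (aux_cpow_ne_zero hv _)
  · have hlog : Complex.log (v ^ ((α⁻¹ : ℝ):ℂ)) = ((α⁻¹:ℝ):ℂ) * Complex.log v :=
      aux_log_cpow hv hb1 hb2
    rw [Complex.cpow_def_of_ne_zero (aux_cpow_ne_zero hv _), hlog]
    have : ((α⁻¹:ℝ):ℂ) * Complex.log v * (α:ℂ) = Complex.log v := by
      have hα : (α:ℂ) ≠ 0 := by simp only [ne_eq, Complex.ofReal_eq_zero]; linarith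
      push_cast
      field_simp
    rw [this, Complex.exp_log hv]

-- Möbius forward: disk to RHP
lemma aux_mobius_mem {z : ℂ} (hz : ‖z‖ < 1) : 0 < ((1 + z) / (1 - z)).re := by
  have hz1 : (1:ℂ) - z ≠ 0 := by
    intro h
    have : z = 1 := by linear_combination -h
    simp [this] at hz
  rw [Complex.div_re, ← add_div]
  apply div_pos
  · have : (1 + z).re * (1 - z).re + (1 + z).im * (1 - z).im
        = 1 - (z.re * z.re + z.im * z.im) := by
      simp [Complex.add_re, Complex.add_im, Complex.sub_re, Complex.sub_im]; ring
    rw [this]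
    have h2 : z.re * z.re + z.im * z.im < 1 := by
      have := Complex.sq_norm z
      rw [Complex.normSq_apply] at this
      nlinarith [norm_nonneg z]
    linarith
  · exact Complex.normSq_pos.2 hz1

-- Möbius inverse: RHP to disk
lemma aux_mobius_surj {w : ℂ} (hw : 0 < w.re) :
    ∃ z : ℂ, ‖z‖ < 1 ∧ (1 + z) / (1 - z) = w := by
  have hw1 : w + 1 ≠ 0 := by
    intro h
    have : w.re + 1 = 0 := by
      have := congrArg Complex.re h; simpa using this
    linarith
  refine ⟨(w - 1) / (w + 1), ?_, ?_⟩
  · rw [norm_div, div_lt_one (norm_pos_iff.2 hw1)]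
    have h1 : Complex.normSq (w - 1) < Complex.normSq (w + 1) := by
      simp only [Complex.normSq_apply, Complex.sub_re, Complex.sub_im,
        Complex.add_re, Complex.add_im, Complex.one_re, Complex.one_im]
      nlinarith
    have := Real.sqrt_lt_sqrt (Complex.normSq_nonneg _) h1
    rwa [Complex.norm_def, Complex.norm_def]
  · have h2 : (1:ℂ) - (w - 1) / (w + 1) = 2 / (w + 1) := by
      field_simp
      ring
    have h3 : (1:ℂ) + (w - 1) / (w + 1) = 2 * w / (w + 1) := by
      field_simp
      ring
    rw [h2, h3]
    rw [div_div_div_cancel_right₀]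
    · exact mul_div_cancel_left₀ w two_ne_zero
    · exact hw1

lemma aux_mobius_inj {z1 z2 : ℂ} (h1 : ‖z1‖ < 1) (h2 : ‖z2‖ < 1)
    (h : (1 + z1) / (1 - z1) = (1 + z2) / (1 - z2)) : z1 = z2 := by
  have hz1 : (1:ℂ) - z1 ≠ 0 := by
    intro h0
    have : z1 = 1 := by linear_combination -h0
    simp [this] at h1
  have hz2 : (1:ℂ) - z2 ≠ 0 := by
    intro h0
    have : z2 = 1 := by linear_combination -h0
    simp [this] at h2
  rw [div_eq_div_iff hz1 hz2] at h
  linear_combination h / 2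

/-- **Example (g).** For `α ∈ [1,2]`, the map
`φ(z) = (1/(2α))[((1+z)/(1-z))^α - 1]` (principal branch) is univalent on the
unit disk, `φ(0) = 0`, and `dist(φ(0), ∂φ(𝔻)) = 1/(2α)`. -/
theorem example_g_univalent_dist
    (α : ℝ) (hα : α ∈ Set.Icc (1 : ℝ) 2)
    (φ : ℂ → ℂ)
    (hφ : ∀ z : ℂ, φ z = (1 / (2 * (α : ℂ))) *
      (((1 + z) / (1 - z)) ^ (α : ℂ) - 1)) :
    Set.InjOn φ unitDisk ∧
    φ 0 = 0 ∧
    Metric.infDist (φ 0) (frontier (φ '' unitDisk)) = 1 / (2 * α) := by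
  obtain ⟨hα1, hα2⟩ := hα
  have hπ := Real.pi_pos
  have hα0 : (0:ℝ) < α := by linarith
  have hαC : (α:ℂ) ≠ 0 := by
    simp only [ne_eq, Complex.ofReal_eq_zero]; linarith
  set c : ℂ := 1 / (2 * (α:ℂ)) with hc
  have hcne : c ≠ 0 := one_div_ne_zero (mul_ne_zero two_ne_zero hαC)
  have hmem : ∀ z : ℂ, z ∈ unitDisk ↔ ‖z‖ < 1 := by
    intro z
    simp [unitDisk, Metric.mem_ball, Complex.dist_eq]
  -- the sector
  set S : Set ℂ := {v : ℂ | v ≠ 0 ∧ |v.arg| < α * π / 2} with hS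
  -- the affine homeomorphism
  set e : ℂ ≃ₜ ℂ := (Homeomorph.addRight (-1 : ℂ)).trans (Homeomorph.mulLeft₀ c hcne) with he
  have heapp : ∀ v : ℂ, e v = c * (v - 1) := by
    intro v
    simp [he, Homeomorph.trans_apply, sub_eq_add_neg]
  have hφe : ∀ z : ℂ, φ z = e (((1 + z) / (1 - z)) ^ (α:ℂ)) := by
    intro z
    rw [hφ, heapp]
  -- g maps the disk into S
  have hgS : ∀ z ∈ unitDisk, ((1 + z) / (1 - z)) ^ (α:ℂ) ∈ S := by
    intro z hz
    have hw : 0 < ((1 + z) / (1 - z)).re := aux_mobius_mem ((hmem z).1 hz)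
    have hwne : (1 + z) / (1 - z) ≠ 0 := by
      intro h0; rw [h0] at hw; simp at hw
    obtain ⟨b1, b2, b3⟩ := aux_arg_bounds hw hα1 hα2
    exact ⟨aux_cpow_ne_zero hwne α, by rw [aux_arg_cpow hwne b1 b2]; exact b3⟩
  -- image equality
  have himg : φ '' unitDisk = e '' S := by
    ext v
    constructor
    · rintro ⟨z, hz, rfl⟩
      exact ⟨_, hgS z hz, (hφe z).symm⟩
    · rintro ⟨v, hv, rfl⟩
      obtain ⟨w, hwre, hwα⟩ := aux_cpow_surj hα1 hα2 hv.1 hv.2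
      obtain ⟨z, hzabs, hzw⟩ := aux_mobius_surj hwre
      exact ⟨z, (hmem z).2 hzabs, by rw [hφe, hzw, hwα]⟩
  -- injectivity
  have hinj : Set.InjOn φ unitDisk := by
    intro z1 h1 z2 h2 heq
    rw [hφe z1, hφe z2] at heq
    have hgeq := e.injective heq
    have hm := aux_cpow_injOn hα1 hα2
      (Set.mem_setOf.2 (aux_mobius_mem ((hmem z1).1 h1)))
      (Set.mem_setOf.2 (aux_mobius_mem ((hmem z2).1 h2))) hgeq
    exact aux_mobius_inj ((hmem z1).1 h1) ((hmem z2).1 h2) hm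
  -- φ 0 = 0
  have hφ0 : φ 0 = 0 := by
    rw [hφ]
    norm_num
  refine ⟨hinj, hφ0, ?_⟩
  -- the ball around 1 is inside S
  have hball : Metric.ball (1:ℂ) 1 ⊆ S := by
    intro v hv
    rw [Metric.mem_ball, Complex.dist_eq] at hv
    have hre : 0 < v.re := by
      have h1 : |(v - 1).re| ≤ ‖v - 1‖ := Complex.abs_re_le_norm _
      have h2 : (v - 1).re = v.re - 1 := by simp
      rw [h2] at h1
      rcases abs_le.1 h1 with ⟨l, r⟩
      linarith
    have hvne : v ≠ 0 := by
      intro h0; rw [h0] at hre; simp at hre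
    refine ⟨hvne, ?_⟩
    have := Complex.abs_arg_lt_pi_div_two_iff.2 (Or.inl hre)
    nlinarith
  -- frontier S avoids the ball
  have hfsub : frontier S ⊆ (Metric.ball (1:ℂ) 1)ᶜ := by
    rw [← frontier_compl]
    exact frontier_subset_closure.trans
      (closure_minimal (compl_subset_compl.2 hball) isOpen_ball.isClosed_compl)
  -- 0 is on the frontier of S
  have h0S : (0:ℂ) ∉ S := fun h => h.1 rfl
  have h0f : (0:ℂ) ∈ frontier S := by
    rw [frontier, Set.mem_diff]
    refine ⟨?_, fun h => h0S (interior_subset h)⟩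
    have htend : Filter.Tendsto (fun n : ℕ => ((1 / (n + 1) : ℝ) : ℂ))
        Filter.atTop (nhds 0) := by
      have h1 := (Complex.continuous_ofReal.tendsto (0:ℝ)).comp
        tendsto_one_div_add_atTop_nhds_zero_nat
      simp only [Function.comp_def, Complex.ofReal_zero] at h1
      exact h1
    refine mem_closure_of_tendsto htend ?_
    filter_upwards with n
    have hpos : (0:ℝ) < 1 / (n + 1 : ℝ) := by positivity
    refine ⟨?_, ?_⟩
    · simp only [ne_eq, Complex.ofReal_eq_zero]
      exact ne_of_gt hpos
    · rw [Complex.arg_ofReal_of_nonneg hpos.le]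
      simp only [abs_zero]
      positivity
  -- norm of c
  have hcnorm : ‖c‖ = 1 / (2 * α) := by
    have : c = ((1 / (2 * α) : ℝ) : ℂ) := by rw [hc]; push_cast; ring
    rw [this, Complex.norm_real, Real.norm_eq_abs, abs_of_pos (by positivity)]
  have hfr : frontier (φ '' unitDisk) = e '' frontier S := by
    rw [himg, e.image_frontier]
  rw [hφ0, hfr]
  have hne : (e '' frontier S).Nonempty := ⟨e 0, Set.mem_image_of_mem e h0f⟩
  have hd0 : dist (0:ℂ) (e 0) = 1 / (2 * α) := by
    rw [heapp, dist_eq_norm]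
    simpa using hcnorm
  apply le_antisymm
  · calc Metric.infDist (0:ℂ) (e '' frontier S) ≤ dist 0 (e 0) :=
          Metric.infDist_le_dist_of_mem (Set.mem_image_of_mem e h0f)
      _ = 1 / (2 * α) := hd0
  · by_contra hlt
    push_neg at hlt
    obtain ⟨y, hy, hdy⟩ := (Metric.infDist_lt_iff hne).1 hlt
    obtain ⟨v, hvf, rfl⟩ := hy
    have hv1 : 1 ≤ ‖v - 1‖ := by
      have := hfsub hvf
      rw [Set.mem_compl_iff, Metric.mem_ball, Complex.dist_eq] at this
      linarith [not_lt.1 this]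
    have : dist (0:ℂ) (e v) = ‖c‖ * ‖v - 1‖ := by
      rw [heapp, dist_eq_norm, zero_sub, norm_neg, norm_mul]
    rw [this, hcnorm] at hdy
    have hcpos : (0:ℝ) < 1 / (2 * α) := by positivity
    nlinarith
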